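/- Let G be a finite connected graph with a starting vertex s. If G has an even kernel with respect to s, then Bob (the second player) has a winning strategy in the feedback game on G with starting vertex s. -/

import Mathlib

/-- `FeedbackWin st E u` : the player to move wins the feedback game with starting
vertex `st`, remaining (unused) edges `E`, and token currently on `u`.  The player
to move wins iff they can move the token along some remaining edge `{u, v}` (which
is then deleted) so that either `v` is the starting vertex `st`, or `v` is incident
with no remaining edge, or the resulting position is a loss for the opponent
(who is then the player to move).  This is a well-founded recursion on the finite
set of remaining edges. -/
def FeedbackWin {V : Type*} [DecidableEq V] (st : V) (E : Finset (Sym2 V)) (u : V) : Prop :=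
  ∃ v, ∃ _hmem : Sym2.mk u v ∈ E,
    v = st ∨ (∀ e ∈ E.erase (Sym2.mk u v), v ∉ e) ∨
      ¬ FeedbackWin st (E.erase (Sym2.mk u v)) v
termination_by E.card
decreasing_by exact Finset.card_erase_lt_of_mem _hmem

/-- Alice (the first player) has a winning strategy in the feedback game on the
finite graph `G` with starting vertex `st`. -/
def AliceWins {V : Type*} [Finite V] [DecidableEq V] (G : SimpleGraph V) (st : V) : Prop :=
  FeedbackWin st G.edgeSet.toFinite.toFinset st

/-- Bob (the second player) has a winning strategy in the feedback game on the
finite graph `G` with starting vertex `st`.  The feedback game is a finite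
two-player game without draws, so by Zermelo determinacy this is equivalent to
Alice not having a winning strategy. -/
def BobWins {V : Type*} [Finite V] [DecidableEq V] (G : SimpleGraph V) (st : V) : Prop :=
  ¬ AliceWins G st

/-- `S` is an even kernel of `G` with respect to `st`: a nonempty set of vertices
containing `st`, no two of whose elements are adjacent, and such that every vertex
not in `S` is adjacent to an even number (possibly `0`) of vertices of `S`. -/
def EvenKernel {V : Type*} (G : SimpleGraph V) (st : V) (S : Set V) : Prop :=
  S.Nonempty ∧ st ∈ S ∧ (∀ u ∈ S, ∀ v ∈ S, ¬ G.Adj u v) ∧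
    ∀ v ∉ S, Even {u | u ∈ S ∧ G.Adj v u}.ncard

open scoped Classical in
/-- Number of remaining edges from `v` to the kernel `S`. -/
noncomputable def Ncount {V : Type*} (S : Set V) (E : Finset (Sym2 V)) (v : V) : ℕ :=
  (E.filter (fun e => ∃ w ∈ S, e = Sym2.mk v w)).card

open scoped Classical

lemma Ncount_erase_mem {V : Type*} [DecidableEq V] {S : Set V} {E : Finset (Sym2 V)}
    {e : Sym2 V} {v : V} (hE : e ∈ E) (hp : ∃ w ∈ S, e = Sym2.mk v w) :
    Ncount S (E.erase e) v + 1 = Ncount S E v := by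
  unfold Ncount
  rw [Finset.filter_erase]
  exact Finset.card_erase_add_one (Finset.mem_filter.2 ⟨hE, hp⟩)

lemma Ncount_erase_not {V : Type*} [DecidableEq V] {S : Set V} {E : Finset (Sym2 V)}
    {e : Sym2 V} {x : V} (hp : ¬ ∃ w ∈ S, e = Sym2.mk x w) :
    Ncount S (E.erase e) x = Ncount S E x := by
  unfold Ncount
  rw [Finset.filter_erase, Finset.erase_eq_of_notMem]
  intro hmem
  exact hp (Finset.mem_filter.1 hmem).2

lemma Ncount_odd_exists {V : Type*} {S : Set V} {E : Finset (Sym2 V)} {v : V}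
    (h : Odd (Ncount S E v)) : ∃ w ∈ S, Sym2.mk v w ∈ E := by
  have hpos : 0 < Ncount S E v := h.pos
  obtain ⟨e, he⟩ := Finset.card_pos.1 hpos
  obtain ⟨heE, w, hwS, rfl⟩ := Finset.mem_filter.1 he
  exact ⟨w, hwS, heE⟩

lemma bob_key {V : Type*} [DecidableEq V] (G : SimpleGraph V) (st : V) (S : Set V)
    (hst : st ∈ S) (hind : ∀ u ∈ S, ∀ v ∈ S, ¬ G.Adj u v) :
    ∀ n (E : Finset (Sym2 V)), E.card ≤ n →
      (∀ a b : V, Sym2.mk a b ∈ E → G.Adj a b) →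
      (∀ v, v ∉ S → Even (Ncount S E v)) →
      ∀ u, u ∈ S → ¬ FeedbackWin st E u := by
  intro n
  induction n with
  | zero =>
    intro E hcard _ _ u _ hwin
    rw [FeedbackWin] at hwin
    obtain ⟨v, hmem, -⟩ := hwin
    rw [Nat.le_zero, Finset.card_eq_zero] at hcard
    simp [hcard] at hmem
  | succ m ih =>
    intro E hcard hEdges hEven u hu hwin
    rw [FeedbackWin] at hwin
    obtain ⟨v, hmem, hcase⟩ := hwin
    have hAdj : G.Adj u v := hEdges u v hmem
    have hv : v ∉ S := fun hvS => hind u hu v hvS hAdj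
    set E' := E.erase (Sym2.mk u v) with hE'
    have h1 : Ncount S E' v + 1 = Ncount S E v :=
      Ncount_erase_mem hmem ⟨u, hu, Sym2.eq_swap⟩
    have hodd : Odd (Ncount S E' v) := by
      have h2 := hEven v hv
      rw [← h1, Nat.even_add_one, Nat.not_even_iff_odd] at h2
      exact h2
    obtain ⟨w, hwS, hwE⟩ := Ncount_odd_exists hodd
    rcases hcase with rfl | hdead | hnw
    · exact hv hst
    · exact hdead _ hwE (Sym2.mem_mk_left v w)
    · apply hnw
      rw [FeedbackWin]
      refine ⟨w, hwE, Or.inr (Or.inr ?_)⟩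
      set E'' := E'.erase (Sym2.mk v w) with hE''
      have hcard'' : E''.card ≤ m := by
        have c1 : E'.card < E.card := Finset.card_erase_lt_of_mem hmem
        have c2 : E''.card ≤ E'.card := Finset.card_erase_le
        omega
      have hEdges'' : ∀ a b : V, Sym2.mk a b ∈ E'' → G.Adj a b := fun a b hab =>
        hEdges a b (Finset.mem_of_mem_erase (Finset.mem_of_mem_erase hab))
      have hEven'' : ∀ x, x ∉ S → Even (Ncount S E'' x) := by
        intro x hx
        by_cases hxv : x = v
        · subst hxv
          have h3 : Ncount S E'' x + 1 = Ncount S E' x :=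
            Ncount_erase_mem hwE ⟨w, hwS, rfl⟩
          have := hodd
          rw [← h3, Nat.odd_add_one, Nat.not_odd_iff_even] at this
          exact this
        · have h4 : Ncount S E'' x = Ncount S E' x := by
            apply Ncount_erase_not
            rintro ⟨w', hw'S, hw'⟩
            rw [Sym2.eq_iff] at hw'
            rcases hw' with ⟨rfl, rfl⟩ | ⟨rfl, rfl⟩
            · exact hxv rfl
            · exact hx hwS
          have h5 : Ncount S E' x = Ncount S E x := by
            apply Ncount_erase_not
            rintro ⟨w', hw'S, hw'⟩
            rw [Sym2.eq_iff] at hw'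
            rcases hw' with ⟨rfl, rfl⟩ | ⟨rfl, rfl⟩
            · exact hx hu
            · exact hxv rfl
          rw [h4, h5]
          exact hEven x hx
      exact ih E'' hcard'' hEdges'' hEven'' w hwS

lemma Ncount_full {V : Type*} [Finite V] [DecidableEq V] (G : SimpleGraph V) (S : Set V)
    (v : V) (hv : v ∉ S) :
    Ncount S G.edgeSet.toFinite.toFinset v = {u | u ∈ S ∧ G.Adj v u}.ncard := by
  rw [Set.ncard_eq_toFinset_card {u | u ∈ S ∧ G.Adj v u} (Set.toFinite _)]
  unfold Ncount
  symm
  apply Finset.card_bij (fun w _ => Sym2.mk v w)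
  · intro w hw
    rw [Set.Finite.mem_toFinset] at hw
    rw [Finset.mem_filter, Set.Finite.mem_toFinset, SimpleGraph.mem_edgeSet]
    exact ⟨hw.2, w, hw.1, rfl⟩
  · intro a ha b hb hab
    rw [Sym2.eq_iff] at hab
    rw [Set.Finite.mem_toFinset] at ha hb
    rcases hab with ⟨-, h⟩ | ⟨h, -⟩
    · exact h
    · exact absurd (h ▸ hb.1) hv
  · intro e he
    rw [Finset.mem_filter, Set.Finite.mem_toFinset] at he
    obtain ⟨hadj, w, hwS, rfl⟩ := he
    rw [SimpleGraph.mem_edgeSet] at hadj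
    exact ⟨w, Set.Finite.mem_toFinset _ |>.2 ⟨hwS, hadj⟩, rfl⟩

/-- If a finite connected graph `G` has an even kernel with respect
to the starting vertex `s`, then Bob (the second player) has a winning strategy in
the feedback game on `G` with starting vertex `s`. -/
theorem even_kernel_bob_wins {V : Type*} [Finite V] [DecidableEq V]
    (G : SimpleGraph V) (s : V) (hconn : G.Connected)
    (h : ∃ S : Set V, EvenKernel G s S) :
    BobWins G s := by
  obtain ⟨S, _hne, hst, hind, heven⟩ := h
  intro hA
  refine bob_key G s S hst hind _ G.edgeSet.toFinite.toFinset le_rfl ?_ ?_ s hst hA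
  · intro a b hab
    rw [Set.Finite.mem_toFinset, SimpleGraph.mem_edgeSet] at hab
    exact hab
  · intro v hv
    rw [Ncount_full G S v hv]
    exact heven v hv
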